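/- arXiv:1609.00665 — 2 statements merged into one kernel-verified Lean document; each statement's English description precedes it below -/
import Mathlib

section
/- If V ∈ ℝ is such that V² is not a natural number, then the family of vectors {(eₙ₁,ₙ₂, 0) : n₂ = 0} ∪ {(eₙ₁,ₙ₂, αₙ₂⁽±⁾ eₙ₁,ₙ₂₋₁) : n₂ ≥ 1} is complete (total) in ℓ² ⊕ ℓ²: the only vector orthogonal to all of them is zero. -/
open Complex

/-- Principal complex square root √(n − V²). -/
noncomputable def sqVal (n : ℕ) (V : ℝ) : ℂ := ((n : ℂ) - (V : ℂ) ^ 2) ^ ((1 : ℂ) / 2)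

noncomputable def aP (n : ℕ) (V : ℝ) : ℂ :=
  -Complex.I * (sqVal n V - Complex.I * V) / (Real.sqrt n : ℂ)

noncomputable def aM (n : ℕ) (V : ℝ) : ℂ :=
  Complex.I * (sqVal n V + Complex.I * V) / (Real.sqrt n : ℂ)

lemma sqVal_ne_zero (n : ℕ) (V : ℝ) (hV : V ^ 2 ≠ (n : ℝ)) : sqVal n V ≠ 0 := by
  unfold sqVal
  intro h
  rw [Complex.cpow_eq_zero_iff] at h
  have h2 : ((V ^ 2 : ℝ) : ℂ) = ((n : ℝ) : ℂ) := by
    push_cast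
    linear_combination -h.1
  exact hV (by exact_mod_cast h2)

lemma diff_ne (n : ℕ) (hn : 1 ≤ n) (V : ℝ) (hV : V ^ 2 ≠ (n : ℝ)) :
    aP n V - aM n V ≠ 0 := by
  have hr : (Real.sqrt n : ℂ) ≠ 0 := by
    simp only [ne_eq, Complex.ofReal_eq_zero]
    positivity
  have hs := sqVal_ne_zero n V hV
  have : aP n V - aM n V = -2 * Complex.I * sqVal n V / (Real.sqrt n : ℂ) := by
    unfold aP aM
    field_simp
    ring_nf
  rw [this]
  simp [hr, hs, Complex.I_ne_zero, sub_eq_zero]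

/-- If V² is not a natural number, the family of eigenvectors
{(e_{n₁,0}, 0)} ∪ {(e_{n₁,n₂}, αₙ₂⁽±⁾ e_{n₁,n₂−1}) : n₂ ≥ 1} is complete in 𝓗 ⊕ 𝓗:
any f = (f₁, f₂) orthogonal to all of them vanishes. -/
theorem stmt_13 {𝓗 : Type*} [NormedAddCommGroup 𝓗] [InnerProductSpace ℂ 𝓗]
    (b : HilbertBasis (ℕ × ℕ) ℂ 𝓗) (V : ℝ) (hV : ∀ m : ℕ, V ^ 2 ≠ (m : ℝ))
    (f₁ f₂ : 𝓗)
    (h0 : ∀ n₁ : ℕ, (inner ℂ f₁ (b (n₁, 0)) : ℂ) = 0)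
    (hP : ∀ n₁ n₂ : ℕ, 1 ≤ n₂ →
      (inner ℂ f₁ (b (n₁, n₂)) : ℂ) + aP n₂ V * (inner ℂ f₂ (b (n₁, n₂ - 1)) : ℂ) = 0)
    (hM : ∀ n₁ n₂ : ℕ, 1 ≤ n₂ →
      (inner ℂ f₁ (b (n₁, n₂)) : ℂ) + aM n₂ V * (inner ℂ f₂ (b (n₁, n₂ - 1)) : ℂ) = 0) :
    f₁ = 0 ∧ f₂ = 0 := by
  have hf2 : ∀ n₁ m : ℕ, (inner ℂ f₂ (b (n₁, m)) : ℂ) = 0 := by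
    intro n₁ m
    have h1 := hP n₁ (m + 1) (by omega)
    have h2 := hM n₁ (m + 1) (by omega)
    simp only [Nat.add_sub_cancel] at h1 h2
    have hd : (aP (m + 1) V - aM (m + 1) V) * (inner ℂ f₂ (b (n₁, m)) : ℂ) = 0 := by
      linear_combination h1 - h2
    exact (mul_eq_zero.mp hd).resolve_left (diff_ne (m + 1) (by omega) V (hV (m + 1)))
  have hf1 : ∀ n₁ n₂ : ℕ, (inner ℂ f₁ (b (n₁, n₂)) : ℂ) = 0 := by
    intro n₁ n₂
    rcases Nat.eq_zero_or_pos n₂ with h | h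
    · subst h; exact h0 n₁
    · have := hP n₁ n₂ h
      rw [hf2 n₁ (n₂ - 1)] at this
      simpa using this
  have key : ∀ (g : 𝓗), (∀ i : ℕ × ℕ, (inner ℂ g (b i) : ℂ) = 0) → g = 0 := by
    intro g hg
    have : b.repr g = 0 := by
      ext i
      rw [b.repr_apply_apply]
      rw [← inner_conj_symm, hg i, map_zero]
      simp
    simpa using b.repr.injective (by simpa using this)
  exact ⟨key f₁ fun i => hf1 i.1 i.2, key f₂ fun i => hf2 i.1 i.2⟩
end

section
/- If V² = m₀ for some positive integer m₀, then the family {(eₙ₁,₀, 0)} ∪ {(eₙ₁,ₙ₂, αₙ₂⁽±⁾eₙ₁,ₙ₂₋₁) : n₂ ≥ 1} is NOT complete in 𝓗 ⊕ 𝓗: the nonzero vector (e₀,ₘ₀, e₀,ₘ₀₋₁) is orthogonal to every member of the family. -/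
open Complex

lemma sqVal_eq_zero (V : ℝ) (m₀ : ℕ) (hV : V ^ 2 = (m₀ : ℝ)) : sqVal m₀ V = 0 := by
  unfold sqVal
  have : (m₀ : ℂ) - (V : ℂ) ^ 2 = 0 := by
    have h2 : ((V:ℝ) ^ 2 : ℂ) = ((m₀:ℝ) : ℂ) := by exact_mod_cast congrArg Complex.ofReal hV
    push_cast at h2
    rw [← h2]; ring
  rw [this, Complex.zero_cpow (by norm_num)]

lemma sqrt_eq (V : ℝ) (hV0 : 0 < V) (m₀ : ℕ) (hV : V ^ 2 = (m₀ : ℝ)) :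
    Real.sqrt m₀ = V := by
  rw [← hV, Real.sqrt_sq hV0.le]

lemma aP_eq (V : ℝ) (hV0 : 0 < V) (m₀ : ℕ) (hV : V ^ 2 = (m₀ : ℝ)) : aP m₀ V = -1 := by
  unfold aP
  rw [sqVal_eq_zero V m₀ hV, sqrt_eq V hV0 m₀ hV]
  have hVne : (V : ℂ) ≠ 0 := by exact_mod_cast hV0.ne'
  field_simp
  ring_nf
  simp [Complex.I_sq]

lemma aM_eq (V : ℝ) (hV0 : 0 < V) (m₀ : ℕ) (hV : V ^ 2 = (m₀ : ℝ)) : aM m₀ V = -1 := by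
  unfold aM
  rw [sqVal_eq_zero V m₀ hV, sqrt_eq V hV0 m₀ hV]
  have hVne : (V : ℂ) ≠ 0 := by exact_mod_cast hV0.ne'
  field_simp
  ring_nf
  simp [Complex.I_sq]

/-- If V² = m₀ ∈ ℕ₊, the eigenvector family is NOT complete: the nonzero vector
(e_{0,m₀}, e_{0,m₀−1}) is orthogonal to every member of the family. -/
theorem stmt_14 {𝓗 : Type*} [NormedAddCommGroup 𝓗] [InnerProductSpace ℂ 𝓗]
    (b : HilbertBasis (ℕ × ℕ) ℂ 𝓗) (V : ℝ) (hV0 : 0 < V) (m₀ : ℕ) (hm : 1 ≤ m₀)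
    (hV : V ^ 2 = (m₀ : ℝ)) :
    b (0, m₀) ≠ 0 ∧
    (∀ n₁ : ℕ, (inner ℂ (b (0, m₀)) (b (n₁, 0)) : ℂ) = 0) ∧
    (∀ n₁ n₂ : ℕ, 1 ≤ n₂ →
      (inner ℂ (b (0, m₀)) (b (n₁, n₂)) : ℂ)
        + aP n₂ V * (inner ℂ (b (0, m₀ - 1)) (b (n₁, n₂ - 1)) : ℂ) = 0) ∧
    (∀ n₁ n₂ : ℕ, 1 ≤ n₂ →
      (inner ℂ (b (0, m₀)) (b (n₁, n₂)) : ℂ)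
        + aM n₂ V * (inner ℂ (b (0, m₀ - 1)) (b (n₁, n₂ - 1)) : ℂ) = 0) := by
  have hon := b.orthonormal
  have hinner : ∀ i j : ℕ × ℕ, (inner ℂ (b i) (b j) : ℂ) = if i = j then 1 else 0 :=
    orthonormal_iff_ite.mp hon
  refine ⟨hon.ne_zero _, ?_, ?_, ?_⟩
  · intro n₁
    rw [hinner]
    simp [Prod.ext_iff]
    omega
  · intro n₁ n₂ hn₂
    rw [hinner, hinner]
    by_cases h : n₁ = 0 ∧ n₂ = m₀
    · obtain ⟨rfl, rfl⟩ := h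
      simp [aP_eq V hV0 _ hV]
    · have h1 : ¬ ((0, m₀) = (n₁, n₂)) := by
        simp [Prod.ext_iff]; intro h0; intro h2; exact h ⟨h0.symm, h2.symm⟩
      have h2 : ¬ ((0, m₀ - 1) = (n₁, n₂ - 1)) := by
        simp [Prod.ext_iff]; intro h0 h2; exact h ⟨h0.symm, by omega⟩
      simp [h1, h2]
  · intro n₁ n₂ hn₂
    rw [hinner, hinner]
    by_cases h : n₁ = 0 ∧ n₂ = m₀
    · obtain ⟨rfl, rfl⟩ := h
      simp [aM_eq V hV0 _ hV]
    · have h1 : ¬ ((0, m₀) = (n₁, n₂)) := by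
        simp [Prod.ext_iff]; intro h0; intro h2; exact h ⟨h0.symm, h2.symm⟩
      have h2 : ¬ ((0, m₀ - 1) = (n₁, n₂ - 1)) := by
        simp [Prod.ext_iff]; intro h0 h2; exact h ⟨h0.symm, by omega⟩
      simp [h1, h2]
end
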